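/- Let d > 0 be a real number and let v : ℝ → ℝ be continuously differentiable with v² and (v')² integrable on ℝ and v(ξ) → 0 as ξ → +∞ and as ξ → −∞. Then for every x ∈ ℝ: ∫_ℝ p_d(x − ξ)·( v(ξ)²/d + v'(ξ)²/2 ) dξ ≥ v(x)²/(2d). -/

import Mathlib

open MeasureTheory Filter Set

/-- The kernel `p_d(x) = (1/(2√d)) exp(-|x|/√d)`. -/
noncomputable def pd (d : ℝ) (x : ℝ) : ℝ :=
  1 / (2 * Real.sqrt d) * Real.exp (-|x| / Real.sqrt d)

set_option maxHeartbeats 1000000 in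
/-- **The central convolution inequality `p_d ∗ (w² + V²/2) ≥ w²/2` of the blow-up
proof** (with `w = v/√d`, `V = v'`): for `v` continuously differentiable with `v²`,
`(v')²` integrable and `v(ξ) → 0` as `ξ → ±∞`,
`∫ p_d(x-ξ)(v²/d + v'²/2) dξ ≥ v(x)²/(2d)`. -/
theorem convolution_lower_bound (d : ℝ) (hd : 0 < d) (v : ℝ → ℝ) (hv : ContDiff ℝ 1 v)
    (h2 : MeasureTheory.Integrable (fun ξ => (v ξ) ^ 2))
    (h2' : MeasureTheory.Integrable (fun ξ => (deriv v ξ) ^ 2))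
    (hlimTop : Filter.Tendsto v Filter.atTop (nhds 0))
    (hlimBot : Filter.Tendsto v Filter.atBot (nhds 0)) (x : ℝ) :
    (∫ ξ : ℝ, pd d (x - ξ) * ((v ξ) ^ 2 / d + (deriv v ξ) ^ 2 / 2))
      ≥ (v x) ^ 2 / (2 * d) := by
  set s := Real.sqrt d with hsdef
  have hs0 : 0 < s := Real.sqrt_pos.2 hd
  have hss : s * s = d := Real.mul_self_sqrt hd.le
  have hsi : 0 < s⁻¹ := inv_pos.2 hs0
  have hv' : ∀ ξ : ℝ, HasDerivAt v (deriv v ξ) ξ := fun ξ =>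
    ((hv.differentiable one_ne_zero) ξ).hasDerivAt
  have hcv : Continuous v := hv.continuous
  have hcv' : Continuous (deriv v) := hv.continuous_deriv le_rfl
  -- AM-GM key inequality
  have amgm : ∀ a b : ℝ, 2 * a * b ≤ s⁻¹ * a ^ 2 + s * b ^ 2 := by
    intro a b
    have key : s⁻¹ * a ^ 2 + s * b ^ 2 - 2 * a * b = s⁻¹ * (a - s * b) ^ 2 := by
      field_simp
      ring
    nlinarith [mul_nonneg hsi.le (sq_nonneg (a - s * b))]
  -- the dominating function h
  set h : ℝ → ℝ := fun ξ =>
    Real.exp (-|x - ξ| / s) * (2 * s⁻¹ * (v ξ) ^ 2 + s * (deriv v ξ) ^ 2) with hhdef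
  have hinner_nonneg : ∀ ξ : ℝ, 0 ≤ 2 * s⁻¹ * (v ξ) ^ 2 + s * (deriv v ξ) ^ 2 := fun ξ => by
    positivity
  have hexp_le_one : ∀ t : ℝ, t ≤ 0 → Real.exp (t / s) ≤ 1 := by
    intro t ht
    calc Real.exp (t / s) ≤ Real.exp 0 :=
          Real.exp_le_exp.2 (div_nonpos_iff.2 (Or.inr ⟨ht, hs0.le⟩))
      _ = 1 := Real.exp_zero
  have hbig : Integrable (fun ξ => 2 * s⁻¹ * (v ξ) ^ 2 + s * (deriv v ξ) ^ 2) :=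
    (h2.const_mul _).add (h2'.const_mul _)
  have hint : Integrable h := by
    refine hbig.mono' ?_ ?_
    · exact (((continuous_const.sub continuous_id).abs.neg.div_const s).rexp.mul
        ((continuous_const.mul (hcv.pow 2)).add (continuous_const.mul (hcv'.pow 2)))).aestronglyMeasurable
    · filter_upwards with ξ
      rw [Real.norm_eq_abs, abs_mul, Real.abs_exp, abs_of_nonneg (hinner_nonneg ξ)]
      have := hexp_le_one (-|x - ξ|) (neg_nonpos.2 (abs_nonneg _))
      nlinarith [hinner_nonneg ξ, Real.exp_pos (-|x - ξ| / s)]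
  -- the left derivative function
  set g1 : ℝ → ℝ := fun ξ => Real.exp ((ξ - x) / s) * (v ξ) ^ 2 with hg1def
  set g1' : ℝ → ℝ := fun ξ =>
    Real.exp ((ξ - x) / s) * (s⁻¹ * (v ξ) ^ 2 + 2 * v ξ * deriv v ξ) with hg1'def
  have hg1deriv : ∀ ξ : ℝ, HasDerivAt g1 (g1' ξ) ξ := by
    intro ξ
    have he : HasDerivAt (fun ξ : ℝ => Real.exp ((ξ - x) / s))
        (Real.exp ((ξ - x) / s) * (1 / s)) ξ :=
      (((hasDerivAt_id ξ).sub_const x).div_const s).exp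
    have hvsq : HasDerivAt (fun ξ => (v ξ) ^ 2) (2 * v ξ * deriv v ξ) ξ := by
      simpa [mul_comm] using (hv' ξ).fun_pow 2
    have : HasDerivAt (fun i => Real.exp ((i - x) / s) * v i ^ 2) _ ξ := he.fun_mul hvsq
    convert this using 1
    rw [hg1'def]
    field_simp
  have hg1'int : IntegrableOn g1' (Iic x) := by
    refine Integrable.mono' (((h2.const_mul (s⁻¹ + 1)).add h2').integrableOn) ?_ ?_
    · exact ((((continuous_id.sub continuous_const).div_const s).rexp.mul
        ((continuous_const.mul (hcv.pow 2)).add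
          ((continuous_const.mul hcv).mul hcv'))).aestronglyMeasurable).restrict
    · filter_upwards [ae_restrict_mem measurableSet_Iic] with ξ hξ
      have hle : Real.exp ((ξ - x) / s) ≤ 1 := hexp_le_one _ (sub_nonpos.2 hξ)
      rw [Real.norm_eq_abs, abs_mul, Real.abs_exp]
      have habs : |s⁻¹ * (v ξ) ^ 2 + 2 * v ξ * deriv v ξ|
          ≤ (s⁻¹ + 1) * (v ξ) ^ 2 + (deriv v ξ) ^ 2 := by
        rw [abs_le]
        constructor <;> nlinarith [sq_nonneg (v ξ + deriv v ξ), sq_nonneg (v ξ - deriv v ξ),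
          mul_nonneg hsi.le (sq_nonneg (v ξ))]
      calc Real.exp ((ξ - x) / s) * |s⁻¹ * (v ξ) ^ 2 + 2 * v ξ * deriv v ξ|
          ≤ 1 * ((s⁻¹ + 1) * (v ξ) ^ 2 + (deriv v ξ) ^ 2) :=
            mul_le_mul hle habs (abs_nonneg _) one_pos.le
        _ = (s⁻¹ + 1) * (v ξ) ^ 2 + (deriv v ξ) ^ 2 := one_mul _
  have hg1bot : Tendsto g1 atBot (nhds 0) := by
    have e1 : Tendsto (fun ξ : ℝ => (ξ - x) / s) atBot atBot := by
      apply Tendsto.atBot_div_const hs0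
      simpa [sub_eq_add_neg] using tendsto_atBot_add_const_right atBot (-x) tendsto_id
    have e2 : Tendsto (fun ξ : ℝ => Real.exp ((ξ - x) / s)) atBot (nhds 0) :=
      Real.tendsto_exp_atBot.comp e1
    have e3 : Tendsto (fun ξ => (v ξ) ^ 2) atBot (nhds 0) := by
      simpa [pow_two] using hlimBot.mul hlimBot
    simpa using e2.mul e3
  have hFTC1 : ∫ ξ in Iic x, g1' ξ = (v x) ^ 2 := by
    have := integral_Iic_of_hasDerivAt_of_tendsto' (f := g1) (f' := g1') (a := x)
      (fun ξ _ => hg1deriv ξ) hg1'int hg1bot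
    simpa [hg1def] using this
  -- the right derivative function
  set g2 : ℝ → ℝ := fun ξ => Real.exp ((x - ξ) / s) * (v ξ) ^ 2 with hg2def
  set g2' : ℝ → ℝ := fun ξ =>
    Real.exp ((x - ξ) / s) * (-(s⁻¹ * (v ξ) ^ 2) + 2 * v ξ * deriv v ξ) with hg2'def
  have hg2deriv : ∀ ξ : ℝ, HasDerivAt g2 (g2' ξ) ξ := by
    intro ξ
    have he : HasDerivAt (fun ξ : ℝ => Real.exp ((x - ξ) / s))
        (Real.exp ((x - ξ) / s) * (-1 / s)) ξ :=
      (((hasDerivAt_id ξ).const_sub x).div_const s).exp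
    have hvsq : HasDerivAt (fun ξ => (v ξ) ^ 2) (2 * v ξ * deriv v ξ) ξ := by
      simpa [mul_comm] using (hv' ξ).fun_pow 2
    have : HasDerivAt (fun i => Real.exp ((x - i) / s) * v i ^ 2) _ ξ := he.fun_mul hvsq
    convert this using 1
    rw [hg2'def]
    field_simp
  have hg2'int : IntegrableOn g2' (Ioi x) := by
    refine Integrable.mono' (((h2.const_mul (s⁻¹ + 1)).add h2').integrableOn) ?_ ?_
    · exact ((((continuous_const.sub continuous_id).div_const s).rexp.mul
        ((continuous_const.mul (hcv.pow 2)).neg.add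
          ((continuous_const.mul hcv).mul hcv'))).aestronglyMeasurable).restrict
    · filter_upwards [ae_restrict_mem measurableSet_Ioi] with ξ hξ
      have hle : Real.exp ((x - ξ) / s) ≤ 1 := hexp_le_one _ (sub_nonpos.2 (le_of_lt hξ))
      rw [Real.norm_eq_abs, abs_mul, Real.abs_exp]
      have habs : |(-(s⁻¹ * (v ξ) ^ 2) + 2 * v ξ * deriv v ξ)|
          ≤ (s⁻¹ + 1) * (v ξ) ^ 2 + (deriv v ξ) ^ 2 := by
        rw [abs_le]
        constructor <;> nlinarith [sq_nonneg (v ξ + deriv v ξ), sq_nonneg (v ξ - deriv v ξ),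
          mul_nonneg hsi.le (sq_nonneg (v ξ))]
      calc Real.exp ((x - ξ) / s) * |(-(s⁻¹ * (v ξ) ^ 2) + 2 * v ξ * deriv v ξ)|
          ≤ 1 * ((s⁻¹ + 1) * (v ξ) ^ 2 + (deriv v ξ) ^ 2) :=
            mul_le_mul hle habs (abs_nonneg _) one_pos.le
        _ = (s⁻¹ + 1) * (v ξ) ^ 2 + (deriv v ξ) ^ 2 := one_mul _
  have hg2top : Tendsto g2 atTop (nhds 0) := by
    have e1 : Tendsto (fun ξ : ℝ => (x - ξ) / s) atTop atBot := by
      apply Tendsto.atBot_div_const hs0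
      exact (tendsto_atBot_add_const_left atTop x tendsto_neg_atTop_atBot).congr (fun ξ => by ring)
    have e2 : Tendsto (fun ξ : ℝ => Real.exp ((x - ξ) / s)) atTop (nhds 0) :=
      Real.tendsto_exp_atBot.comp e1
    have e3 : Tendsto (fun ξ => (v ξ) ^ 2) atTop (nhds 0) := by
      simpa [pow_two] using hlimTop.mul hlimTop
    simpa using e2.mul e3
  have hFTC2 : ∫ ξ in Ioi x, g2' ξ = -((v x) ^ 2) := by
    have := integral_Ioi_of_hasDerivAt_of_tendsto' (f := g2) (f' := g2') (a := x)
      (fun ξ _ => hg2deriv ξ) hg2'int hg2top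
    simpa [hg2def] using this
  -- compare g1' with h on Iic x
  have hcomp1 : ∫ ξ in Iic x, g1' ξ ≤ ∫ ξ in Iic x, h ξ := by
    refine setIntegral_mono_on hg1'int hint.integrableOn measurableSet_Iic ?_
    intro ξ hξ
    have habs : |x - ξ| = x - ξ := abs_of_nonneg (sub_nonneg.2 hξ)
    simp only [hg1'def, hhdef, habs]
    have hexp : Real.exp ((ξ - x) / s) = Real.exp (-(x - ξ) / s) := by ring_nf
    rw [hexp]
    apply mul_le_mul_of_nonneg_left _ (Real.exp_pos _).le
    nlinarith [amgm (v ξ) (deriv v ξ)]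
  -- compare -g2' with h on Ioi x
  have hcomp2 : ∫ ξ in Ioi x, (-(g2' ξ)) ≤ ∫ ξ in Ioi x, h ξ := by
    refine setIntegral_mono_on hg2'int.neg hint.integrableOn measurableSet_Ioi ?_
    intro ξ hξ
    have habs : |x - ξ| = ξ - x := by
      rw [abs_of_nonpos (sub_nonpos.2 (le_of_lt hξ))]; ring
    simp only [hg2'def, hhdef, habs]
    have hexp : Real.exp ((x - ξ) / s) = Real.exp (-(ξ - x) / s) := by ring_nf
    rw [hexp]
    rw [← mul_neg]
    apply mul_le_mul_of_nonneg_left _ (Real.exp_pos _).le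
    nlinarith [amgm (v ξ) (-(deriv v ξ))]
  -- sum the two halves
  have hnegint : ∫ ξ in Ioi x, (-(g2' ξ)) = (v x) ^ 2 := by
    rw [integral_neg, hFTC2, neg_neg]
  have hsum : (∫ ξ in Iic x, h ξ) + ∫ ξ in Ioi x, h ξ = ∫ ξ, h ξ :=
    intervalIntegral.integral_Iic_add_Ioi hint.integrableOn hint.integrableOn
  have hmain : 2 * (v x) ^ 2 ≤ ∫ ξ, h ξ := by
    rw [← hsum]
    have := hcomp1
    have := hcomp2
    linarith [hFTC1 ▸ hcomp1, hnegint ▸ hcomp2]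
  -- rewrite h in terms of pd
  have heq : ∀ ξ : ℝ, h ξ
      = 4 * d * (pd d (x - ξ) * ((v ξ) ^ 2 / d + (deriv v ξ) ^ 2 / 2)) := by
    intro ξ
    simp only [hhdef, pd, ← hsdef]
    rw [← hss]
    have hs0' : s ≠ 0 := hs0.ne'
    field_simp
    ring
  have hmul : ∫ ξ, h ξ
      = 4 * d * ∫ ξ : ℝ, pd d (x - ξ) * ((v ξ) ^ 2 / d + (deriv v ξ) ^ 2 / 2) := by
    simp_rw [heq]
    exact integral_const_mul _ _
  rw [ge_iff_le, div_le_iff₀ (by positivity : (0:ℝ) < 2 * d)]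
  nlinarith [hmain, hmul]
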